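/- Let (A, ≻, ≺) be a finite-dimensional anti-dendriform algebra and r ∈ A⊗A. Then r satisfies the anti-dendriform Yang-Baxter equation r₁₂·r₁₃ + r₂₃≻r₁₂ - r₁₃≺r₂₃ = 0 if and only if T_r(η) ≺ T_r(ζ) = T_r(R_≻*(T_r(η))ζ + L_·*(T_{τ(r)}(ζ))η) for all η, ζ ∈ A*. -/

import Mathlib

open TensorProduct

set_option synthInstance.maxHeartbeats 1000000
set_option maxHeartbeats 1600000

variable {K : Type*} [Field K]

/-- The anti-dendriform algebra identities for two bilinear operations `s` (≻) and `p` (≺):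
`x≻(y≻z) = -(x·y)≻z = -x≺(y·z) = (x≺y)≺z` and `(x≻y)≺z = x≻(y≺z)`, where `x·y = x≻y + x≺y`. -/
def IsAntiDend {M : Type*} [AddCommGroup M] [Module K M]
    (s p : M →ₗ[K] M →ₗ[K] M) : Prop :=
  ∀ x y z : M,
    s x (s y z) = - s (s x y + p x y) z ∧
    s x (s y z) = - p x (s y z + p y z) ∧
    s x (s y z) = p (p x y) z ∧
    p (s x y) z = s x (p y z)

/-- The bilinear map `a ⊗ b ↦ (ζ ↦ ζ(a) • b)` used to define `T_r`. -/
noncomputable def Tbil {M : Type*} [AddCommGroup M] [Module K M] :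
    M →ₗ[K] M →ₗ[K] (Module.Dual K M →ₗ[K] M) :=
  LinearMap.mk₂ K (fun a b => (Module.Dual.eval K M a).smulRight b)
    (fun a a' b => by ext ζ; simp [add_smul])
    (fun c a b => by
      ext ζ
      simp only [LinearMap.smulRight_apply, LinearMap.smul_apply, map_smul,
        Module.Dual.eval_apply, smul_eq_mul, mul_smul])
    (fun a b b' => by ext ζ; simp)
    (fun c a b => by
      ext ζ
      simp only [LinearMap.smulRight_apply, LinearMap.smul_apply]
      exact smul_comm _ _ _)

/-- `T_r : A* → A`, `⟨T_r ζ, η⟩ = ⟨r, ζ ⊗ η⟩`; concretely `T_r ζ = Σ ζ(aᵢ) • bᵢ`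
for `r = Σ aᵢ ⊗ bᵢ`. -/
noncomputable def TmL {M : Type*} [AddCommGroup M] [Module K M] (r : M ⊗[K] M) :
    Module.Dual K M →ₗ[K] M :=
  TensorProduct.lift Tbil r

/-- The flip `τ : A ⊗ A → A ⊗ A`. -/
noncomputable def tau {M : Type*} [AddCommGroup M] [Module K M] (r : M ⊗[K] M) : M ⊗[K] M :=
  TensorProduct.comm K M M r

/-- `r` is invariant: `(R_≺(x)⊗I + I⊗L_·(x)) r = 0` and `(R_·(x)⊗I + I⊗L_≻(x)) r = 0`. -/
def Invariant {M : Type*} [AddCommGroup M] [Module K M]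
    (s p : M →ₗ[K] M →ₗ[K] M) (r : M ⊗[K] M) : Prop :=
  ∀ x : M,
    TensorProduct.map (p.flip x) (LinearMap.id : M →ₗ[K] M) r
      + TensorProduct.map (LinearMap.id : M →ₗ[K] M) ((s + p) x) r = 0 ∧
    TensorProduct.map ((s + p).flip x) (LinearMap.id : M →ₗ[K] M) r
      + TensorProduct.map (LinearMap.id : M →ₗ[K] M) (s x) r = 0

/-- `(a⊗b)⊗(c⊗d) ↦ (m a c) ⊗ b ⊗ d` : the product is placed in the first tensor slot,
giving `r₁₂ ∗ r₁₃` when applied to `r ⊗ r`. -/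
noncomputable def place1 {M : Type*} [AddCommGroup M] [Module K M]
    (m : M →ₗ[K] M →ₗ[K] M) :
    (M ⊗[K] M) ⊗[K] (M ⊗[K] M) →ₗ[K] M ⊗[K] (M ⊗[K] M) :=
  (TensorProduct.map (TensorProduct.lift m)
      (LinearMap.id : M ⊗[K] M →ₗ[K] M ⊗[K] M)) ∘ₗ
    (TensorProduct.tensorTensorTensorComm K M M M M).toLinearMap

/-- `(a⊗b)⊗(c⊗d) ↦ c ⊗ (m a d) ⊗ b` : the product in the second slot, giving `r₂₃ ∗ r₁₂`. -/
noncomputable def place2 {M : Type*} [AddCommGroup M] [Module K M]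
    (m : M →ₗ[K] M →ₗ[K] M) :
    (M ⊗[K] M) ⊗[K] (M ⊗[K] M) →ₗ[K] M ⊗[K] (M ⊗[K] M) :=
  (TensorProduct.leftComm K M M M).toLinearMap ∘ₗ
  (TensorProduct.map (LinearMap.id : M →ₗ[K] M) (TensorProduct.comm K M M).toLinearMap) ∘ₗ
  (TensorProduct.map (TensorProduct.lift m)
      (LinearMap.id : M ⊗[K] M →ₗ[K] M ⊗[K] M)) ∘ₗ
  (TensorProduct.tensorTensorTensorComm K M M M M).toLinearMap ∘ₗ
  (TensorProduct.congr (LinearEquiv.refl K (M ⊗[K] M)) (TensorProduct.comm K M M)).toLinearMap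

/-- `(a⊗b)⊗(c⊗d) ↦ a ⊗ c ⊗ (m b d)` : the product in the third slot, giving `r₁₃ ∗ r₂₃`. -/
noncomputable def place3 {M : Type*} [AddCommGroup M] [Module K M]
    (m : M →ₗ[K] M →ₗ[K] M) :
    (M ⊗[K] M) ⊗[K] (M ⊗[K] M) →ₗ[K] M ⊗[K] (M ⊗[K] M) :=
  (TensorProduct.assoc K M M M).toLinearMap ∘ₗ
  (TensorProduct.map (LinearMap.id : M ⊗[K] M →ₗ[K] M ⊗[K] M) (TensorProduct.lift m)) ∘ₗ
  (TensorProduct.tensorTensorTensorComm K M M M M).toLinearMap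

/-- `D(r) = r₁₂·r₁₃ + r₂₃≻r₁₂ - r₁₃≺r₂₃`. -/
noncomputable def adD {M : Type*} [AddCommGroup M] [Module K M]
    (s p : M →ₗ[K] M →ₗ[K] M) (r : M ⊗[K] M) : M ⊗[K] (M ⊗[K] M) :=
  place1 (s + p) (r ⊗ₜ[K] r) + place2 s (r ⊗ₜ[K] r) - place3 p (r ⊗ₜ[K] r)

/-- `D₁(r) = r₂₃·r₁₂ + r₁₃≻r₂₃ + r₁₂≺r₁₃`. -/
noncomputable def adD1 {M : Type*} [AddCommGroup M] [Module K M]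
    (s p : M →ₗ[K] M →ₗ[K] M) (r : M ⊗[K] M) : M ⊗[K] (M ⊗[K] M) :=
  place2 (s + p) (r ⊗ₜ[K] r) + place3 s (r ⊗ₜ[K] r) + place1 p (r ⊗ₜ[K] r)

/-- `D₂(r) = r₁₃·r₂₃ - r₁₂≻r₁₃ + r₂₃≺r₁₂`. -/
noncomputable def adD2 {M : Type*} [AddCommGroup M] [Module K M]
    (s p : M →ₗ[K] M →ₗ[K] M) (r : M ⊗[K] M) : M ⊗[K] (M ⊗[K] M) :=
  place3 (s + p) (r ⊗ₜ[K] r) - place1 s (r ⊗ₜ[K] r) + place2 p (r ⊗ₜ[K] r)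

/-- The anti-dendriform Yang-Baxter equation `D(r) = 0`. -/
noncomputable def AYBE {M : Type*} [AddCommGroup M] [Module K M]
    (s p : M →ₗ[K] M →ₗ[K] M) (r : M ⊗[K] M) : Prop :=
  adD s p r = 0

variable {A : Type*} [AddCommGroup A] [Module K A]


section Aux

variable {A : Type*} [AddCommGroup A] [Module K A]

/-- Contract the first tensor factor with a functional. -/
noncomputable def cmap {N : Type*} [AddCommGroup N] [Module K N]
    (ξ : Module.Dual K A) : A ⊗[K] N →ₗ[K] N :=
  TensorProduct.lift ((LinearMap.lsmul K N) ∘ₗ ξ)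

@[simp] lemma cmap_tmul {N : Type*} [AddCommGroup N] [Module K N]
    (ξ : Module.Dual K A) (a : A) (n : N) : cmap ξ (a ⊗ₜ[K] n) = ξ a • n := rfl

@[simp] lemma TmL_tmul (a b : A) (η : Module.Dual K A) :
    TmL (a ⊗ₜ[K] b) η = η a • b := rfl

@[simp] lemma TmL_zero (η : Module.Dual K A) : TmL (0 : A ⊗[K] A) η = 0 := by
  simp [TmL]

@[simp] lemma TmL_add (x y : A ⊗[K] A) (η : Module.Dual K A) :
    TmL (x + y) η = TmL x η + TmL y η := by
  simp [TmL]

@[simp] lemma tau_tmul (a b : A) : tau (a ⊗ₜ[K] b) = b ⊗ₜ[K] a := rfl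

@[simp] lemma tau_zero : tau (0 : A ⊗[K] A) = 0 := by simp [tau]

@[simp] lemma dmap_add (f g : A →ₗ[K] A) (η : Module.Dual K A) :
    (f + g).dualMap η = f.dualMap η + g.dualMap η := by ext x; simp

@[simp] lemma dmap_zero (η : Module.Dual K A) :
    ((0 : A →ₗ[K] A)).dualMap η = 0 := by ext x; simp

@[simp] lemma tau_add (x y : A ⊗[K] A) : tau (x + y) = tau x + tau y := by
  simp [tau]

lemma coord_cmap {ι : Type*} [Fintype ι] [DecidableEq ι] (B : Module.Basis ι K A)
    (t : A ⊗[K] (A ⊗[K] A)) (i j k : ι) :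
    (B.tensorProduct (B.tensorProduct B)).repr t (i, (j, k)) =
      B.repr (cmap (B.coord j) (cmap (B.coord i) t)) k := by
  induction t using TensorProduct.induction_on with
  | zero => simp
  | add x y hx hy => simp [hx, hy]
  | tmul a u =>
    induction u using TensorProduct.induction_on with
    | zero => simp
    | add x y hx hy => simp [hx, hy, tmul_add]
    | tmul b c =>
      simp only [Module.Basis.tensorProduct_repr_tmul_apply, Module.Basis.coord_apply, cmap_tmul,
        map_smul, Finsupp.smul_apply, smul_eq_mul]
      ring

lemma cmap_inj [FiniteDimensional K A] (t : A ⊗[K] (A ⊗[K] A))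
    (h : ∀ η ζ : Module.Dual K A, cmap ζ (cmap η t) = 0) : t = 0 := by
  classical
  let B := Module.finBasis K A
  rw [← LinearEquiv.map_eq_zero_iff (B.tensorProduct (B.tensorProduct B)).repr]
  ext x
  obtain ⟨i, j, k⟩ := x
  rw [coord_cmap B t i j k, h, map_zero]
  simp

lemma key (s p : A →ₗ[K] A →ₗ[K] A) (r1 r2 : A ⊗[K] A) (η ζ : Module.Dual K A) :
    cmap ζ (cmap η (place1 (s + p) (r1 ⊗ₜ[K] r2) + place2 s (r1 ⊗ₜ[K] r2)
        - place3 p (r1 ⊗ₜ[K] r2))) =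
      TmL r2 (((s + p) (TmL (tau r1) ζ)).dualMap η)
        + TmL r1 ((s.flip (TmL r2 η)).dualMap ζ)
        - p (TmL r1 η) (TmL r2 ζ) := by
  induction r1 using TensorProduct.induction_on with
  | zero => simp [place1, place2, place3]
  | add x y hx hy =>
    simp only [add_tmul, map_add]
    have e : ∀ P1x P1y P2x P2y P3x P3y : A ⊗[K] (A ⊗[K] A),
        P1x + P1y + (P2x + P2y) - (P3x + P3y)
          = (P1x + P2x - P3x) + (P1y + P2y - P3y) := by intros; abel
    rw [e, map_add, map_add, hx, hy]
    simp only [tau_add, TmL_add, map_add, dmap_add, LinearMap.add_apply]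
    abel
  | tmul a b =>
    induction r2 using TensorProduct.induction_on with
    | zero => simp [place1, place2, place3]
    | add x y hx hy =>
      simp only [tmul_add, map_add]
      have e : ∀ P1x P1y P2x P2y P3x P3y : A ⊗[K] (A ⊗[K] A),
          P1x + P1y + (P2x + P2y) - (P3x + P3y)
            = (P1x + P2x - P3x) + (P1y + P2y - P3y) := by intros; abel
      rw [e, map_add, map_add, hx, hy]
      simp only [TmL_add, map_add, dmap_add, LinearMap.add_apply]
      abel
    | tmul c d =>
      simp [place1, place2, place3, smul_smul, mul_comm, tmul_smul, smul_tmul',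
        TensorProduct.tensorTensorTensorComm_tmul, smul_sub, smul_add, mul_add,
        add_mul, add_smul]

end Aux

/-- `r` solves the AD-YBE iff
`T_r(η) ≺ T_r(ζ) = T_r(R_≻*(T_r(η))ζ + L_·*(T_{τ(r)}(ζ))η)`. -/
theorem stmt8 [FiniteDimensional K A]
    (s p : A →ₗ[K] A →ₗ[K] A) (h : IsAntiDend s p) (r : A ⊗[K] A) :
    AYBE s p r ↔
      ∀ (η ζ : Module.Dual K A),
        p (TmL r η) (TmL r ζ) =
          TmL r ((s.flip (TmL r η)).dualMap ζ + ((s + p) (TmL (tau r) ζ)).dualMap η) := by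
  have key0 : ∀ η ζ : Module.Dual K A,
      cmap ζ (cmap η (adD s p r)) =
        TmL r (((s + p) (TmL (tau r) ζ)).dualMap η)
          + TmL r ((s.flip (TmL r η)).dualMap ζ)
          - p (TmL r η) (TmL r ζ) := fun η ζ => key s p r r η ζ
  constructor
  · intro hr η ζ
    have hk := key0 η ζ
    rw [hr] at hk
    simp only [map_zero] at hk
    rw [map_add]
    have := (sub_eq_zero.mp hk.symm).symm
    rw [this]; abel
  · intro hcond
    apply cmap_inj
    intro η ζ
    rw [key0 η ζ]
    have h' := hcond η ζ
    rw [map_add] at h'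
    rw [h']; abel
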